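/- For every integer n ≥ 2 and every pair of distinct elements i, j ∈ [[n]], the number of cross edges between the clusters BP_n^i and BP_n^j of the burnt pancake graph satisfies |E(BP_n^i, BP_n^j)| = (n−2)! · 2^{n−2} if i ≠ −j, and |E(BP_n^i, BP_n^j)| = 0 if i = −j. -/

import Mathlib

open SimpleGraph

/-- A signed permutation of `{1,…,n}`: a sequence of integers whose absolute
values form a permutation of `{1,…,n}`. -/
def SignedPerm (n : ℕ) : Type :=
  {x : Fin n → ℤ // (∀ i, 1 ≤ |x i| ∧ |x i| ≤ (n : ℤ)) ∧
    Function.Injective (fun i => |x i|)}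

/-- `prefixRevRel n i x y` means `y = x^i`, the `i`-th signed prefix reversal
of `x` (for `1 ≤ i ≤ n`). -/
def prefixRevRel (n i : ℕ) (x y : SignedPerm n) : Prop :=
  ∃ _h1 : 1 ≤ i, ∃ _h2 : i ≤ n, ∀ j : Fin n,
    (∀ _hj : (j : ℕ) < i, y.val j = - x.val ⟨i - 1 - (j : ℕ), by omega⟩) ∧
    ((i ≤ (j : ℕ)) → y.val j = x.val j)

/-- The burnt pancake graph `BP_n`. -/
def burntPancake (n : ℕ) : SimpleGraph (SignedPerm n) where
  Adj x y := x ≠ y ∧ ∃ i : ℕ, prefixRevRel n i x y ∨ prefixRevRel n i y x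
  symm := by
    refine ⟨?_⟩
    rintro x y ⟨hne, i, h⟩
    exact ⟨hne.symm, i, h.symm⟩
  loopless := by
    refine ⟨?_⟩
    rintro x ⟨hne, -⟩
    exact hne rfl

/-- The last entry of a signed permutation; the cluster `BP_n^j` consists of
the vertices with last entry `j`. -/
def lastEntry {n : ℕ} (hn : 0 < n) (x : SignedPerm n) : ℤ :=
  x.val ⟨n - 1, by omega⟩

/-- `y` is the out-neighbour of `x`, i.e. `y = x^n`. -/
def isOutNbr (n : ℕ) (x y : SignedPerm n) : Prop := prefixRevRel n n x y

/-- `T` is a family of `r` pairwise internally edge disjoint `S`-trees in `G`. -/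
def InternallyEdgeDisjointSTrees {V : Type*} (G : SimpleGraph V) (S : Set V)
    {r : ℕ} (T : Fin r → G.Subgraph) : Prop :=
  (∀ i, (T i).coe.IsTree ∧ S ⊆ (T i).verts) ∧
  ∀ i j, i ≠ j → (T i).verts ∩ (T j).verts = S ∧ (T i).edgeSet ∩ (T j).edgeSet = ∅

/-- `κ_G(S)`: the maximum number of pairwise internally edge disjoint `S`-trees. -/
noncomputable def treeConn {V : Type*} (G : SimpleGraph V) (S : Set V) : ℕ :=
  sSup {r : ℕ | ∃ T : Fin r → G.Subgraph, InternallyEdgeDisjointSTrees G S T}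

/-- The generalized `3`-connectivity `κ₃(G)`. -/
noncomputable def gconn3 {V : Type*} (G : SimpleGraph V) : ℕ :=
  sInf (treeConn G '' {S : Set V | S.ncard = 3})

/-- The connectivity `κ(G)`: the minimum cardinality of a set of vertices whose
deletion disconnects the graph or leaves fewer than two vertices. -/
noncomputable def vconn {V : Type*} (G : SimpleGraph V) : ℕ :=
  sInf {k : ℕ | ∃ U : Set V, U.Finite ∧ U.ncard = k ∧
    (¬ (G.induce Uᶜ).Connected ∨ Uᶜ.Subsingleton)}

private def revn {n : ℕ} (hn : 0 < n) (x : SignedPerm n) : SignedPerm n :=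
  ⟨fun k => - x.val ⟨n - 1 - (k : ℕ), by omega⟩, by
    obtain ⟨h1, h2⟩ := x.property
    refine ⟨fun k => by simpa using h1 ⟨n - 1 - (k : ℕ), by omega⟩, ?_⟩
    intro a b hab
    simp only [abs_neg] at hab
    have h3 : (⟨n - 1 - (a : ℕ), by omega⟩ : Fin n) = ⟨n - 1 - (b : ℕ), by omega⟩ := h2 hab
    have h4 : n - 1 - (a : ℕ) = n - 1 - (b : ℕ) := congrArg Fin.val h3
    have ha := a.isLt; have hb := b.isLt
    exact Fin.ext (by omega)⟩

private lemma revn_val {n : ℕ} (hn : 0 < n) (x : SignedPerm n) (k : Fin n) :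
    (revn hn x).val k = - x.val ⟨n - 1 - (k : ℕ), by omega⟩ := rfl

private lemma revn_revn {n : ℕ} (hn : 0 < n) (x : SignedPerm n) :
    revn hn (revn hn x) = x := by
  apply Subtype.ext; funext k
  rw [revn_val, revn_val, neg_neg]
  have hk := k.isLt
  have e : (⟨n - 1 - (n - 1 - (k:ℕ)), by omega⟩ : Fin n) = k :=
    Fin.ext (by show n - 1 - (n - 1 - (k:ℕ)) = (k:ℕ); omega)
  rw [e]

private lemma prefixRevRel_revn {n : ℕ} (hn : 0 < n) (x : SignedPerm n) :
    prefixRevRel n n x (revn hn x) :=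
  ⟨hn, le_refl n, fun k => ⟨fun _ => rfl, fun h => absurd k.isLt (by omega)⟩⟩

private lemma prefixRevRel_cases {n : ℕ} (hn : 0 < n) {k : ℕ} (x y : SignedPerm n)
    (h : prefixRevRel n k x y) :
    lastEntry hn y = lastEntry hn x ∨ y = revn hn x := by
  obtain ⟨h1, h2, hf⟩ := h
  obtain hlt | heq := h2.lt_or_eq
  · left; exact (hf ⟨n - 1, by omega⟩).2 (by show k ≤ n - 1; omega)
  · right
    subst heq
    apply Subtype.ext; funext m
    rw [revn_val]
    exact (hf m).1 m.isLt

private lemma lastEntry_revn {n : ℕ} (hn : 0 < n) (x : SignedPerm n) :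
    lastEntry hn (revn hn x) = - x.val ⟨0, hn⟩ := by
  rw [lastEntry, revn_val]
  have e : (⟨n - 1 - (n - 1), by omega⟩ : Fin n) = ⟨0, hn⟩ := Fin.ext (by show n - 1 - (n - 1) = 0; omega)
  rw [e]

private lemma adj_iff_revn {n : ℕ} (hn : 0 < n) (x y : SignedPerm n)
    (hne : lastEntry hn x ≠ lastEntry hn y) :
    (burntPancake n).Adj x y ↔ y = revn hn x := by
  constructor
  · rintro ⟨-, k, hk | hk⟩
    · rcases prefixRevRel_cases hn x y hk with h | h
      · exact absurd h.symm hne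
      · exact h
    · rcases prefixRevRel_cases hn y x hk with h | h
      · exact absurd h hne
      · rw [h, revn_revn]
  · rintro rfl
    refine ⟨fun h => hne (congrArg (lastEntry hn) h), n, Or.inl (prefixRevRel_revn hn x)⟩

private noncomputable def crossA (n : ℕ) (i j : ℤ) : Finset ℤ := Finset.Icc 1 (n : ℤ) \ {|i|, |j|}

private def crossG (n : ℕ) (i j : ℤ) : Set (Fin (n - 2) → ℤ) :=
  {g | (∀ k, |g k| ∈ crossA n i j) ∧ Function.Injective fun k => |g k|}

private lemma card_crossA (n : ℕ) (hn : 2 ≤ n) (i j : ℤ)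
    (hi : 1 ≤ |i| ∧ |i| ≤ (n : ℤ)) (hj : 1 ≤ |j| ∧ |j| ≤ (n : ℤ))
    (habs : |i| ≠ |j|) : (crossA n i j).card = n - 2 := by
  have hsub : ({|i|, |j|} : Finset ℤ) ⊆ Finset.Icc 1 (n : ℤ) := by
    intro v hv
    simp only [Finset.mem_insert, Finset.mem_singleton] at hv
    rcases hv with rfl | rfl <;> simp [Finset.mem_Icc, hi.1, hi.2, hj.1, hj.2]
  rw [crossA, Finset.card_sdiff_of_subset hsub, Finset.card_pair habs, Int.card_Icc]
  simp

private lemma card_crossG (n : ℕ) (hn : 2 ≤ n) (i j : ℤ)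
    (hi : 1 ≤ |i| ∧ |i| ≤ (n : ℤ)) (hj : 1 ≤ |j| ∧ |j| ≤ (n : ℤ))
    (habs : |i| ≠ |j|) :
    (crossG n i j).ncard = (n - 2).factorial * 2 ^ (n - 2) := by
  have hApos : ∀ v : ℤ, v ∈ crossA n i j → 1 ≤ v := by
    intro v hv
    rw [crossA, Finset.mem_sdiff, Finset.mem_Icc] at hv
    exact hv.1.1
  have key : ∀ (v : ℤ) (b : Bool), 1 ≤ v → |if b then v else -v| = v := by
    intro v b hv
    cases b
    · rw [if_neg (by simp), abs_neg, abs_of_nonneg (by omega)]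
    · rw [if_pos rfl, abs_of_nonneg (by omega)]
  have e : (crossG n i j) ≃ (Fin (n - 2) ↪ (crossA n i j)) × (Fin (n - 2) → Bool) := by
    refine
      { toFun := fun g =>
          (⟨fun k => ⟨|g.val k|, g.property.1 k⟩,
            fun a b h => g.property.2 (congrArg Subtype.val h)⟩,
           fun k => decide (0 ≤ g.val k)),
        invFun := fun fs =>
          ⟨fun k => if fs.2 k then (fs.1 k : ℤ) else -(fs.1 k : ℤ), ?_, ?_⟩,
        left_inv := ?_, right_inv := ?_ }
    · intro k
      have h1 : (1 : ℤ) ≤ (fs.1 k : ℤ) := hApos _ (fs.1 k).property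
      rw [key _ _ h1]
      exact (fs.1 k).property
    · intro a b hab
      have h1a : (1 : ℤ) ≤ (fs.1 a : ℤ) := hApos _ (fs.1 a).property
      have h1b : (1 : ℤ) ≤ (fs.1 b : ℤ) := hApos _ (fs.1 b).property
      have hab' : |if fs.2 a then (fs.1 a : ℤ) else -(fs.1 a : ℤ)|
          = |if fs.2 b then (fs.1 b : ℤ) else -(fs.1 b : ℤ)| := hab
      rw [key _ _ h1a, key _ _ h1b] at hab'
      exact fs.1.injective (Subtype.ext hab')
    · rintro ⟨g, hg⟩
      apply Subtype.ext; funext k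
      show (if decide (0 ≤ g k) then |g k| else -|g k|) = g k
      by_cases hk : 0 ≤ g k
      · rw [if_pos (by simpa using hk), abs_of_nonneg hk]
      · rw [if_neg (by simpa using hk), abs_of_neg (lt_of_not_ge hk), neg_neg]
    · rintro ⟨f, s⟩
      refine Prod.ext ?_ ?_
      · apply Function.Embedding.ext
        intro k
        apply Subtype.ext
        have h1 : (1 : ℤ) ≤ (f k : ℤ) := hApos _ (f k).property
        show |if s k then (f k : ℤ) else -(f k : ℤ)| = (f k : ℤ)
        exact key _ _ h1
      · funext k
        have h1 : (1 : ℤ) ≤ (f k : ℤ) := hApos _ (f k).property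
        show decide (0 ≤ if s k then (f k : ℤ) else -(f k : ℤ)) = s k
        cases hs : s k
        · rw [if_neg (by simp)]
          simp only [decide_eq_false_iff_not]
          omega
        · rw [if_pos rfl]
          simp only [decide_eq_true_eq]
          omega
  rw [← Nat.card_coe_set_eq, Nat.card_congr e, Nat.card_prod,
    Nat.card_eq_fintype_card, Nat.card_eq_fintype_card, Fintype.card_embedding_eq,
    Fintype.card_coe, card_crossA n hn i j hi hj habs, Fintype.card_fun,
    Fintype.card_bool, Fintype.card_fin, Nat.descFactorial_self]

private def crossPsi (n : ℕ) (hn : 2 ≤ n) (x : SignedPerm n) (k : Fin (n - 2)) : ℤ :=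
  x.val ⟨(k : ℕ) + 1, by have := k.isLt; omega⟩

private def crossBuild (n : ℕ) (hn : 2 ≤ n) (i j : ℤ) (g : Fin (n - 2) → ℤ)
    (idx : Fin n) : ℤ :=
  if _h0 : (idx : ℕ) = 0 then -j
  else if _h1 : (idx : ℕ) = n - 1 then i
  else g ⟨(idx : ℕ) - 1, by have := idx.isLt; omega⟩

private lemma crossBuild_zero (n : ℕ) (hn : 2 ≤ n) (i j : ℤ) (g : Fin (n - 2) → ℤ)
    (idx : Fin n) (h0 : (idx : ℕ) = 0) : crossBuild n hn i j g idx = -j :=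
  dif_pos h0

private lemma crossBuild_last (n : ℕ) (hn : 2 ≤ n) (i j : ℤ) (g : Fin (n - 2) → ℤ)
    (idx : Fin n) (h0 : ¬ (idx : ℕ) = 0) (h1 : (idx : ℕ) = n - 1) :
    crossBuild n hn i j g idx = i := by
  rw [crossBuild, dif_neg h0, dif_pos h1]

private lemma crossBuild_mid (n : ℕ) (hn : 2 ≤ n) (i j : ℤ) (g : Fin (n - 2) → ℤ)
    (idx : Fin n) (h0 : ¬ (idx : ℕ) = 0) (h1 : ¬ (idx : ℕ) = n - 1) :
    crossBuild n hn i j g idx = g ⟨(idx : ℕ) - 1, by have := idx.isLt; omega⟩ := by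
  rw [crossBuild, dif_neg h0, dif_neg h1]

private lemma ncard_S (n : ℕ) (hn : 2 ≤ n) (i j : ℤ)
    (hi : 1 ≤ |i| ∧ |i| ≤ (n : ℤ)) (hj : 1 ≤ |j| ∧ |j| ≤ (n : ℤ))
    (habs : |i| ≠ |j|) :
    {x : SignedPerm n | x.val ⟨n - 1, by omega⟩ = i ∧ x.val ⟨0, lt_of_lt_of_le two_pos hn⟩ = -j}.ncard
      = (crossG n i j).ncard := by
  set S : Set (SignedPerm n) :=
    {x : SignedPerm n | x.val ⟨n - 1, by omega⟩ = i ∧ x.val ⟨0, lt_of_lt_of_le two_pos hn⟩ = -j} with hS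
  have hinj : Set.InjOn (crossPsi n hn) S := by
    intro x hx y hy h
    apply Subtype.ext; funext idx
    by_cases h0 : (idx : ℕ) = 0
    · have e : idx = ⟨0, by omega⟩ := Fin.ext h0
      rw [e]
      exact hx.2.trans hy.2.symm
    · by_cases h1 : (idx : ℕ) = n - 1
      · have e : idx = ⟨n - 1, by omega⟩ := Fin.ext h1
        rw [e]
        exact hx.1.trans hy.1.symm
      · have hlt := idx.isLt
        have := congrFun h ⟨(idx : ℕ) - 1, by omega⟩
        have e : (⟨(idx : ℕ) - 1 + 1, by omega⟩ : Fin n) = idx :=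
          Fin.ext (by show (idx : ℕ) - 1 + 1 = (idx : ℕ); omega)
        rw [crossPsi, crossPsi] at this
        rw [← e]
        exact this
  have himg : crossPsi n hn '' S = crossG n i j := by
    ext g
    constructor
    · rintro ⟨x, hx, rfl⟩
      obtain ⟨hb, hinj'⟩ := x.property
      constructor
      · intro k
        have hk := k.isLt
        rw [crossA, Finset.mem_sdiff, Finset.mem_Icc]
        refine ⟨⟨(hb _).1, (hb _).2⟩, ?_⟩
        simp only [Finset.mem_insert, Finset.mem_singleton]
        rintro (hgi | hgj)
        · have heq : |x.val ⟨(k : ℕ) + 1, by omega⟩| = |x.val ⟨n - 1, by omega⟩| := by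
            rw [hx.1]; exact hgi
          have h2 := hinj' heq
          have h3 : (k : ℕ) + 1 = n - 1 := congrArg Fin.val h2
          omega
        · have heq : |x.val ⟨(k : ℕ) + 1, by omega⟩| = |x.val ⟨0, by omega⟩| := by
            rw [hx.2, abs_neg]; exact hgj
          have h2 := hinj' heq
          have h3 : (k : ℕ) + 1 = 0 := congrArg Fin.val h2
          omega
      · intro a b hab
        have ha := a.isLt; have hb' := b.isLt
        have h2 := hinj' (hab : |x.val ⟨(a : ℕ) + 1, by omega⟩| = |x.val ⟨(b : ℕ) + 1, by omega⟩|)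
        have h3 : (a : ℕ) + 1 = (b : ℕ) + 1 := congrArg Fin.val h2
        exact Fin.ext (by omega)
    · intro hg
      obtain ⟨hgA, hginj⟩ := hg
      have hgA' : ∀ k, 1 ≤ |g k| ∧ |g k| ≤ (n : ℤ) ∧ |g k| ≠ |i| ∧ |g k| ≠ |j| := by
        intro k
        have := hgA k
        rw [crossA, Finset.mem_sdiff, Finset.mem_Icc] at this
        simp only [Finset.mem_insert, Finset.mem_singleton, not_or] at this
        exact ⟨this.1.1, this.1.2, this.2.1, this.2.2⟩
      have hprop : (∀ idx, 1 ≤ |crossBuild n hn i j g idx| ∧ |crossBuild n hn i j g idx| ≤ (n : ℤ)) ∧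
          Function.Injective fun idx => |crossBuild n hn i j g idx| := by
        constructor
        · intro idx
          by_cases h0 : (idx : ℕ) = 0
          · rw [crossBuild_zero n hn i j g idx h0, abs_neg]; exact hj
          · by_cases h1 : (idx : ℕ) = n - 1
            · rw [crossBuild_last n hn i j g idx h0 h1]; exact hi
            · rw [crossBuild_mid n hn i j g idx h0 h1]
              exact ⟨(hgA' _).1, (hgA' _).2.1⟩
        · intro a b hab
          simp only [] at hab
          have ha := a.isLt; have hb' := b.isLt
          by_cases a0 : (a : ℕ) = 0 <;> by_cases b0 : (b : ℕ) = 0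
          · exact Fin.ext (by omega)
          · rw [crossBuild_zero n hn i j g a a0, abs_neg] at hab
            by_cases b1 : (b : ℕ) = n - 1
            · rw [crossBuild_last n hn i j g b b0 b1] at hab
              exact absurd hab.symm habs
            · rw [crossBuild_mid n hn i j g b b0 b1] at hab
              exact absurd hab.symm (hgA' _).2.2.2
          · rw [crossBuild_zero n hn i j g b b0, abs_neg] at hab
            by_cases a1 : (a : ℕ) = n - 1
            · rw [crossBuild_last n hn i j g a a0 a1] at hab
              exact absurd hab habs
            · rw [crossBuild_mid n hn i j g a a0 a1] at hab
              exact absurd hab (hgA' _).2.2.2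
          · by_cases a1 : (a : ℕ) = n - 1 <;> by_cases b1 : (b : ℕ) = n - 1
            · exact Fin.ext (by omega)
            · rw [crossBuild_last n hn i j g a a0 a1,
                crossBuild_mid n hn i j g b b0 b1] at hab
              exact absurd hab.symm (hgA' _).2.2.1
            · rw [crossBuild_mid n hn i j g a a0 a1,
                crossBuild_last n hn i j g b b0 b1] at hab
              exact absurd hab (hgA' _).2.2.1
            · rw [crossBuild_mid n hn i j g a a0 a1,
                crossBuild_mid n hn i j g b b0 b1] at hab
              have h2 := hginj hab
              have h3 : (a : ℕ) - 1 = (b : ℕ) - 1 := congrArg Fin.val h2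
              exact Fin.ext (by omega)
      refine ⟨⟨crossBuild n hn i j g, hprop⟩, ⟨?_, ?_⟩, ?_⟩
      · exact crossBuild_last n hn i j g ⟨n - 1, by omega⟩ (by show ¬ (n - 1 = 0); omega)
          (by show n - 1 = n - 1; rfl)
      · exact crossBuild_zero n hn i j g ⟨0, by omega⟩ rfl
      · funext k
        have hk := k.isLt
        show crossBuild n hn i j g ⟨(k : ℕ) + 1, by omega⟩ = g k
        rw [crossBuild_mid n hn i j g _ (by show ¬ ((k : ℕ) + 1 = 0); omega)
          (by show ¬ ((k : ℕ) + 1 = n - 1); omega)]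
        congr 1
  rw [← himg, Set.ncard_image_of_injOn hinj]

/-- For `n ≥ 2` and distinct `i, j ∈ [[n]]`, the number of cross edges
between the clusters `BP_n^i` and `BP_n^j` is `(n-2)! · 2^{n-2}` if
`i ≠ -j`, and `0` if `i = -j`. -/
theorem bp_cross_edges_count (n : ℕ) (hn : 2 ≤ n) (i j : ℤ)
    (hi : 1 ≤ |i| ∧ |i| ≤ (n : ℤ)) (hj : 1 ≤ |j| ∧ |j| ≤ (n : ℤ))
    (hij : i ≠ j) :
    (i ≠ -j →
      {p : SignedPerm n × SignedPerm n |
          lastEntry (by omega) p.1 = i ∧ lastEntry (by omega) p.2 = j ∧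
          (burntPancake n).Adj p.1 p.2}.ncard
        = (n - 2).factorial * 2 ^ (n - 2)) ∧
    (i = -j →
      {p : SignedPerm n × SignedPerm n |
          lastEntry (by omega) p.1 = i ∧ lastEntry (by omega) p.2 = j ∧
          (burntPancake n).Adj p.1 p.2}.ncard = 0) := by
  have hn1 : (0 : ℕ) < n := by omega
  have hP : {p : SignedPerm n × SignedPerm n |
          lastEntry (by omega) p.1 = i ∧ lastEntry (by omega) p.2 = j ∧
          (burntPancake n).Adj p.1 p.2}
      = (fun x => (x, revn hn1 x)) ''
        {x : SignedPerm n | x.val ⟨n - 1, by omega⟩ = i ∧ x.val ⟨0, by omega⟩ = -j} := by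
    ext ⟨x, y⟩
    simp only [Set.mem_setOf_eq, Set.mem_image, Prod.mk.injEq]
    constructor
    · rintro ⟨hx, hy, hadj⟩
      have hx' : lastEntry hn1 x = i := hx
      have hy' : lastEntry hn1 y = j := hy
      have hne : lastEntry hn1 x ≠ lastEntry hn1 y := by
        rw [hx', hy']; exact hij
      have hrev : y = revn hn1 x := (adj_iff_revn hn1 x y hne).mp hadj
      refine ⟨x, ⟨hx', ?_⟩, rfl, hrev.symm⟩
      have hle := lastEntry_revn hn1 x
      rw [← hrev, hy'] at hle
      show x.val ⟨0, hn1⟩ = -j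
      omega
    · rintro ⟨x, ⟨hx1, hx0⟩, rfl, rfl⟩
      have hx1' : lastEntry hn1 x = i := hx1
      have hx0' : x.val ⟨0, hn1⟩ = -j := hx0
      have h2 : lastEntry hn1 (revn hn1 x) = j := by
        rw [lastEntry_revn hn1 x, hx0', neg_neg]
      refine ⟨hx1', h2, ?_⟩
      exact (adj_iff_revn hn1 x _ (by rw [hx1', h2]; exact hij)).mpr rfl
  have himgcard : ((fun x => (x, revn hn1 x)) ''
        {x : SignedPerm n | x.val ⟨n - 1, by omega⟩ = i ∧ x.val ⟨0, by omega⟩ = -j}).ncard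
      = {x : SignedPerm n | x.val ⟨n - 1, by omega⟩ = i ∧ x.val ⟨0, by omega⟩ = -j}.ncard :=
    Set.ncard_image_of_injOn (fun a _ b _ h => congrArg Prod.fst h)
  constructor
  · intro hij2
    have habs : |i| ≠ |j| := by
      intro h
      rcases abs_eq_abs.mp h with h | h
      · exact hij h
      · exact hij2 h
    rw [hP, himgcard, ncard_S n hn i j hi hj habs, card_crossG n hn i j hi hj habs]
  · intro hij2
    have hempty : {x : SignedPerm n | x.val ⟨n - 1, by omega⟩ = i ∧ x.val ⟨0, by omega⟩ = -j}
        = (∅ : Set (SignedPerm n)) := by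
      ext x
      simp only [Set.mem_setOf_eq, Set.mem_empty_iff_false, iff_false, not_and]
      intro hx1 hx0
      have e : x.val ⟨n - 1, by omega⟩ = x.val ⟨0, by omega⟩ :=
        hx1.trans (hij2.trans hx0.symm)
      have e2 : (⟨n - 1, by omega⟩ : Fin n) = ⟨0, by omega⟩ :=
        x.property.2 (congrArg (fun v : ℤ => |v|) e)
      have e3 : n - 1 = 0 := congrArg Fin.val e2
      omega
    rw [hP, hempty, Set.image_empty, Set.ncard_empty]
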